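/- arXiv:2101.11982 — 2 statements merged into one kernel-verified Lean document; each statement's English description precedes it below -/
import Mathlib

section
/- Let i ≥ 2 and suppose d_i = 1, where d_i = dim_F(C_i ∩ L_1). Then for every nonzero l ∈ L_i, the F-subspace span_F{⁅l, a⁆ : a ∈ L_1} of M_{i+1} has dimension 1 over F. -/
open Submodule

/-- The `i`-th two-step centraliser `C_i = {a ∈ M_1 | ⁅a, u⁆ = 0 for all u ∈ M_i}`. -/
def twoStepCentraliser {E : Type*} [Field E] {M : Type*} [LieRing M] [LieAlgebra E M]
    (Mc : ℕ → Submodule E M) (i : ℕ) : Submodule E M where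
  carrier := {a : M | a ∈ Mc 1 ∧ ∀ u ∈ Mc i, ⁅a, u⁆ = 0}
  add_mem' := by
    rintro a b ⟨ha1, ha2⟩ ⟨hb1, hb2⟩
    exact ⟨add_mem ha1 hb1, fun u hu => by rw [add_lie, ha2 u hu, hb2 u hu, add_zero]⟩
  zero_mem' := ⟨zero_mem _, fun u _ => zero_lie u⟩
  smul_mem' := by
    rintro c a ⟨ha1, ha2⟩
    exact ⟨Submodule.smul_mem _ c ha1, fun u hu => by rw [smul_lie, ha2 u hu, smul_zero]⟩

/-- `Mc` is a grading of `M` as a graded Lie algebra of maximal class over `E`,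
generated in degree 1. -/
structure IsMaximalClass (E : Type*) [Field E] (M : Type*) [LieRing M] [LieAlgebra E M]
    (Mc : ℕ → Submodule E M) : Prop where
  zero_bot : Mc 0 = ⊥
  internal : DirectSum.IsInternal Mc
  lie_mem : ∀ i j : ℕ, ∀ x ∈ Mc i, ∀ y ∈ Mc j, ⁅x, y⁆ ∈ Mc (i + j)
  finrank_one : Module.finrank E ↥(Mc 1) = 2
  finrank_eq_one : ∀ i : ℕ, 2 ≤ i → Module.finrank E ↥(Mc i) = 1
  span_succ : ∀ i : ℕ, 1 ≤ i →
    Mc (i + 1) = Submodule.span E {z : M | ∃ v ∈ Mc i, ∃ a ∈ Mc 1, z = ⁅v, a⁆}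

/-- The homogeneous components of the Lie `F`-subalgebra generated by `X` and `Y` in
degree 1:  `L_1 = span_F {X, Y}` and `L_{i+1} = span_F {⁅v, a⁆ : v ∈ L_i, a ∈ L_1}`. -/
def Lcomp (F : Type*) [Field F] {M : Type*} [LieRing M] [Module F M]
    (X Y : M) : ℕ → Submodule F M
  | 0 => ⊥
  | 1 => Submodule.span F {X, Y}
  | (i + 2) => Submodule.span F
      {z : M | ∃ v ∈ Lcomp F X Y (i + 1), ∃ a ∈ Submodule.span F ({X, Y} : Set M), z = ⁅v, a⁆}

/-- `d_i = dim_F (C_i ∩ L_1)`. -/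
noncomputable def dSeq (E : Type*) [Field E] {M : Type*} [LieRing M] [LieAlgebra E M]
    (Mc : ℕ → Submodule E M) (F : Type*) [Field F] [Algebra F E] [LieAlgebra F M]
    [IsScalarTower F E M] (X Y : M) (i : ℕ) : ℕ :=
  Module.finrank F
    ↥(Submodule.restrictScalars F (twoStepCentraliser Mc i) ⊓ Lcomp F X Y 1)

section Aux


lemma span_pair_rel_finrank {F M : Type*} [Field F] [AddCommGroup M] [Module F M]
    (u v : M) (α β : F)
    (hrel : α • u + β • v = 0) (hαβ : ¬(α = 0 ∧ β = 0)) (huv : ¬(u = 0 ∧ v = 0)) :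
    Module.finrank F ↥(span F {u, v}) = 1 := by
  by_cases hα : α = 0
  · have hβ : β ≠ 0 := fun h => hαβ ⟨hα, h⟩
    have hv : v = 0 := by
      have : β • v = 0 := by rwa [hα, zero_smul, zero_add] at hrel
      exact (smul_eq_zero.mp this).resolve_left hβ
    have hu : u ≠ 0 := fun h => huv ⟨h, hv⟩
    have : span F ({u, v} : Set M) = span F {u} := by
      apply le_antisymm
      · rw [span_le]
        rintro z (rfl | rfl)
        · exact subset_span rfl
        · rw [hv]; exact zero_mem _
      · exact span_mono (by simp)
    rw [this, finrank_span_singleton hu]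
  · have hu' : u = (-(α⁻¹ * β)) • v := by
      have : α • u = -(β • v) := by rw [eq_neg_iff_add_eq_zero]; exact hrel
      rw [neg_smul, mul_smul, ← smul_neg, ← this, ← smul_assoc, smul_eq_mul,
        inv_mul_cancel₀ hα, one_smul]
    have hv : v ≠ 0 := by
      rintro rfl
      exact huv ⟨by rw [hu', smul_zero], rfl⟩
    have : span F ({u, v} : Set M) = span F {v} := by
      apply le_antisymm
      · rw [span_le]
        rintro z (rfl | rfl)
        · rw [hu']; exact smul_mem _ _ (subset_span rfl)
        · exact subset_span rfl
      · exact span_mono (by simp)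
    rw [this, finrank_span_singleton hv]

lemma Lcomp_le_Mc (E : Type*) [Field E] (M : Type*) [LieRing M] [LieAlgebra E M]
    (Mc : ℕ → Submodule E M) (hM : IsMaximalClass E M Mc)
    (F : Type*) [Field F] [Algebra F E] [LieAlgebra F M] [IsScalarTower F E M]
    (X Y : M) (hX : X ∈ Mc 1) (hY : Y ∈ Mc 1) :
    ∀ i : ℕ, Lcomp F X Y i ≤ Submodule.restrictScalars F (Mc i) := by
  have h1 : Lcomp F X Y 1 ≤ Submodule.restrictScalars F (Mc 1) := by
    rw [show Lcomp F X Y 1 = Submodule.span F {X, Y} from rfl, span_le]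
    rintro z (rfl | rfl) <;> assumption
  intro i
  induction i using Nat.strong_induction_on with
  | _ i ih =>
    match i with
    | 0 => simp [Lcomp]
    | 1 => exact h1
    | (k + 2) =>
      rw [show Lcomp F X Y (k+2) = Submodule.span F
        {z : M | ∃ v ∈ Lcomp F X Y (k + 1), ∃ a ∈ Submodule.span F ({X, Y} : Set M), z = ⁅v, a⁆}
        from rfl, span_le]
      rintro z ⟨v, hv, a, ha, rfl⟩
      exact hM.lie_mem (k + 1) 1 v (ih (k + 1) (by omega) hv) a (h1 ha)


end Aux

/-- if `i ≥ 2` and `d_i = 1`, then `dim_F ⁅l, L_1⁆ = 1` for every nonzero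
`l ∈ L_i`. -/
theorem stmt_6 (E : Type*) [Field E] (M : Type*) [LieRing M] [LieAlgebra E M]
    (Mc : ℕ → Submodule E M) (hM : IsMaximalClass E M Mc)
    (F : Type*) [Field F] [Algebra F E] [LieAlgebra F M] [IsScalarTower F E M]
    (X Y : M) (hX : X ∈ Mc 1) (hY : Y ∈ Mc 1) (hXY : LinearIndependent E ![X, Y])
    (i : ℕ) (hi : 2 ≤ i) (hd : dSeq E Mc F X Y i = 1) :
    ∀ l ∈ Lcomp F X Y i, l ≠ 0 →
      Module.finrank F
        ↥(Submodule.span F {z : M | ∃ a ∈ Lcomp F X Y 1, z = ⁅l, a⁆}) = 1 := by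
  intro l hl hl0
  have hL1 : Lcomp F X Y 1 = Submodule.span F ({X, Y} : Set M) := rfl
  have hlMc : l ∈ Mc i := Lcomp_le_Mc E M Mc hM F X Y hX hY i hl
  -- the span equals span {⁅l,X⁆, ⁅l,Y⁆}
  set f : M →ₗ[F] M := LieAlgebra.ad F M l with hf
  have hset : {z : M | ∃ a ∈ Lcomp F X Y 1, z = ⁅l, a⁆} = f '' (Lcomp F X Y 1 : Set M) := by
    ext z
    simp only [Set.mem_setOf_eq, Set.mem_image, SetLike.mem_coe, hf, LieAlgebra.ad_apply]
    exact ⟨fun ⟨a, ha, hz⟩ => ⟨a, ha, hz.symm⟩, fun ⟨a, ha, hz⟩ => ⟨a, ha, hz.symm⟩⟩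
  have hspan : Submodule.span F {z : M | ∃ a ∈ Lcomp F X Y 1, z = ⁅l, a⁆}
      = Submodule.span F ({⁅l, X⁆, ⁅l, Y⁆} : Set M) := by
    rw [hset, hL1, Submodule.span_image, Submodule.span_span, Submodule.map_span]
    congr 1
    ext z
    simp [hf, Set.image_insert_eq, LieAlgebra.ad_apply]
  rw [hspan]
  -- pick nonzero c in C_i ⊓ L_1
  set P := Submodule.restrictScalars F (twoStepCentraliser Mc i) ⊓ Lcomp F X Y 1 with hP
  have hdP : Module.finrank F ↥P = 1 := hd
  haveI : FiniteDimensional F ↥P := FiniteDimensional.of_finrank_eq_succ hdP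
  have hPne : P ≠ ⊥ := by
    intro h
    rw [h, finrank_bot] at hdP
    exact one_ne_zero hdP.symm
  obtain ⟨c, hcP, hc0⟩ := Submodule.exists_mem_ne_zero_of_ne_bot hPne
  obtain ⟨hcC, hcL⟩ := hcP
  obtain ⟨α, β, hc⟩ := Submodule.mem_span_pair.mp hcL
  have hcC' : c ∈ twoStepCentraliser Mc i := hcC
  -- relation: α • ⁅l,X⁆ + β • ⁅l,Y⁆ = 0
  have hrel : α • ⁅l, X⁆ + β • ⁅l, Y⁆ = 0 := by
    have : ⁅l, c⁆ = 0 := by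
      have h0 : ⁅c, l⁆ = 0 := hcC'.2 l hlMc
      rw [← lie_skew, h0, neg_zero]
    calc α • ⁅l, X⁆ + β • ⁅l, Y⁆ = ⁅l, α • X + β • Y⁆ := by rw [lie_add, lie_smul, lie_smul]
    _ = 0 := by rw [hc, this]
  have hαβ : ¬(α = 0 ∧ β = 0) := by
    rintro ⟨rfl, rfl⟩
    simp at hc
    exact hc0 hc.symm
  -- not both brackets are zero
  have huv : ¬(⁅l, X⁆ = 0 ∧ ⁅l, Y⁆ = 0) := by
    rintro ⟨hu, hv⟩
    -- Mc i = span E {l}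
    have hfin : Module.finrank E ↥(Mc i) = 1 := hM.finrank_eq_one i hi
    haveI : FiniteDimensional E ↥(Mc i) := FiniteDimensional.of_finrank_eq_succ hfin
    have hle : Submodule.span E {l} ≤ Mc i := by
      rw [Submodule.span_le, Set.singleton_subset_iff]; exact hlMc
    have heq : Submodule.span E {l} = Mc i :=
      Submodule.eq_of_le_of_finrank_le hle (by rw [hfin, finrank_span_singleton hl0])
    have hcent : ∀ a : M, ⁅l, a⁆ = 0 → a ∈ Mc 1 → a ∈ twoStepCentraliser Mc i := by
      intro a hla ha1
      refine ⟨ha1, fun w hw => ?_⟩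
      rw [← heq] at hw
      obtain ⟨e, rfl⟩ := Submodule.mem_span_singleton.mp hw
      rw [lie_smul, ← lie_skew, hla, neg_zero, smul_zero]
    -- then X, Y ∈ P, so finrank P ≥ 2
    have hXP : X ∈ P := ⟨hcent X hu hX, Submodule.subset_span (by simp)⟩
    have hYP : Y ∈ P := ⟨hcent Y hv hY, Submodule.subset_span (by simp)⟩
    have hXYF : LinearIndependent F ![X, Y] :=
      hXY.restrict_scalars (by simpa [Algebra.smul_def] using (algebraMap F E).injective)
    have hspanle : Submodule.span F ({X, Y} : Set M) ≤ P := by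
      rw [Submodule.span_le]
      rintro z (rfl | rfl) <;> assumption
    have hrange : Set.range ![X, Y] = ({X, Y} : Set M) := by
      ext z
      simp only [Matrix.range_cons, Matrix.range_empty, Set.mem_insert_iff,
        Set.mem_singleton_iff, Set.union_empty, Set.union_singleton]
      tauto
    have h2 : Module.finrank F ↥(Submodule.span F ({X, Y} : Set M)) = 2 := by
      have := finrank_span_eq_card hXYF
      rw [hrange] at this
      simpa using this
    have := Submodule.finrank_mono hspanle
    rw [h2, hdP] at this
    omega
  exact span_pair_rel_finrank _ _ α β hrel hαβ huv
end

section
/- One has dim_F L_i = 1 for every i ≥ 2 (that is, L is a graded Lie algebra of maximal class over F) if and only if d_i = 1 for every i ≥ 2, where d_i = dim_F(C_i ∩ L_1). -/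
open Submodule

section helpers

variable {R : Type*} [CommRing R] {M : Type*} [LieRing M] [LieAlgebra R M]

/-- The Lie bracket as a bilinear map. -/
def brkt (R : Type*) [CommRing R] (M : Type*) [LieRing M] [LieAlgebra R M] :
    M →ₗ[R] M →ₗ[R] M :=
  LinearMap.mk₂ R (fun x y => ⁅x, y⁆) add_lie smul_lie lie_add lie_smul

lemma span_bracket_eq (s t : Set M) :
    span R {z : M | ∃ v ∈ span R s, ∃ a ∈ span R t, z = ⁅v, a⁆}
      = span R (Set.image2 (fun v a => ⁅v, a⁆) s t) := by
  have hset : {z : M | ∃ v ∈ span R s, ∃ a ∈ span R t, z = ⁅v, a⁆}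
      = Set.image2 (fun v a => brkt R M v a) (span R s : Set M) (span R t : Set M) := by
    ext z
    simp only [Set.mem_setOf_eq, Set.mem_image2, SetLike.mem_coe]
    constructor
    · rintro ⟨v, hv, a, ha, rfl⟩; exact ⟨v, hv, a, ha, rfl⟩
    · rintro ⟨v, hv, a, ha, rfl⟩; exact ⟨v, hv, a, ha, rfl⟩
  rw [hset, ← map₂_eq_span_image2, map₂_span_span]
  rfl

lemma span_bracket_pair_self (X Y : M) :
    span R (Set.image2 (fun v a => ⁅v, a⁆) ({X, Y} : Set M) ({X, Y} : Set M))
      = span R {⁅X, Y⁆} := by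
  apply le_antisymm
  · rw [span_le]
    rintro z ⟨v, hv, a, ha, rfl⟩
    simp only [Set.mem_insert_iff, Set.mem_singleton_iff] at hv ha
    have hXY : ⁅X, Y⁆ ∈ span R ({⁅X, Y⁆} : Set M) := mem_span_singleton_self _
    have hYX : ⁅Y, X⁆ ∈ span R ({⁅X, Y⁆} : Set M) := by
      have := neg_mem hXY
      rwa [lie_skew] at this
    rcases hv with rfl | rfl <;> rcases ha with rfl | rfl
    · simp only [SetLike.mem_coe, lie_self]; exact zero_mem _
    · exact hXY
    · exact hYX
    · simp only [SetLike.mem_coe, lie_self]; exact zero_mem _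
  · rw [span_le]
    rintro z rfl
    exact subset_span ⟨X, Or.inl rfl, Y, Or.inr rfl, rfl⟩

lemma span_bracket_singleton_pair (w X Y : M) :
    span R (Set.image2 (fun v a => ⁅v, a⁆) ({w} : Set M) ({X, Y} : Set M))
      = span R {⁅w, X⁆, ⁅w, Y⁆} := by
  rw [Set.image2_singleton_left, Set.image_pair]

end helpers

section helpers2

variable {R : Type*} [Field R] {M : Type*} [AddCommGroup M] [Module R M]

lemma span_pair_eq_right' {a b : M} (lam : R) (h : a = lam • b) :
    span R ({a, b} : Set M) = span R {b} := by
  apply le_antisymm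
  · rw [span_le]
    rintro z (rfl | rfl)
    · rw [SetLike.mem_coe, mem_span_singleton]
      exact ⟨lam, h.symm⟩
    · exact subset_span rfl
  · exact span_mono (Set.singleton_subset_iff.2 (Set.mem_insert_of_mem _ rfl))

lemma span_pair_eq_left' {a b : M} (lam : R) (h : b = lam • a) :
    span R ({a, b} : Set M) = span R {a} := by
  rw [Set.pair_comm]
  exact span_pair_eq_right' lam h

end helpers2

section main

variable {E : Type*} [Field E] {M : Type*} [LieRing M] [LieAlgebra E M]
  {Mc : ℕ → Submodule E M}
  {F : Type*} [Field F] [Algebra F E] [LieAlgebra F M] [IsScalarTower F E M]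
  {X Y : M}

lemma mem_twoStepCentraliser {a : M} {i : ℕ} :
    a ∈ twoStepCentraliser Mc i ↔ a ∈ Mc 1 ∧ ∀ u ∈ Mc i, ⁅a, u⁆ = 0 :=
  Iff.rfl

lemma Mc1_eq (hM : IsMaximalClass E M Mc) (hX : X ∈ Mc 1) (hY : Y ∈ Mc 1)
    (hXY : LinearIndependent E ![X, Y]) : Mc 1 = span E {X, Y} := by
  have hle : span E ({X, Y} : Set M) ≤ Mc 1 := by
    rw [span_le]; rintro z (rfl | rfl) <;> assumption
  haveI : FiniteDimensional E (Mc 1) := .of_finrank_eq_succ hM.finrank_one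
  refine (Submodule.eq_of_le_of_finrank_le hle ?_).symm
  have h2 : Module.finrank E ↥(span E (Set.range ![X, Y])) = 2 := by
    rw [finrank_span_eq_card hXY, Fintype.card_fin]
  have hr : Set.range ![X, Y] = ({X, Y} : Set M) := by
    simp only [Matrix.range_cons, Matrix.range_empty, Set.union_empty, Set.union_singleton]
    exact Set.pair_comm Y X
  rw [hr] at h2
  rw [hM.finrank_one, h2]

lemma spanF_pair_le (hX : X ∈ Mc 1) (hY : Y ∈ Mc 1) :
    span F ({X, Y} : Set M) ≤ Submodule.restrictScalars F (Mc 1) := by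
  rw [span_le]
  rintro z (rfl | rfl)
  · exact hX
  · exact hY

lemma Mi_span (hM : IsMaximalClass E M Mc) (i : ℕ) (h2 : 2 ≤ i) {w : M}
    (hw : w ∈ Mc i) (hw0 : w ≠ 0) : Mc i = span E {w} := by
  haveI : FiniteDimensional E (Mc i) := .of_finrank_eq_succ (hM.finrank_eq_one i h2)
  refine (Submodule.eq_of_le_of_finrank_le ((span_le).2 (Set.singleton_subset_iff.2 hw)) ?_).symm
  rw [hM.finrank_eq_one i h2, finrank_span_singleton hw0]

lemma Msucc (hM : IsMaximalClass E M Mc) (hX : X ∈ Mc 1) (hY : Y ∈ Mc 1)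
    (hXY : LinearIndependent E ![X, Y]) (i : ℕ) (h1 : 1 ≤ i) {w : M}
    (hMi : Mc i = span E {w}) : Mc (i + 1) = span E {⁅w, X⁆, ⁅w, Y⁆} := by
  rw [hM.span_succ i h1, hMi, Mc1_eq hM hX hY hXY, span_bracket_eq,
    span_bracket_singleton_pair]

lemma not_both (hM : IsMaximalClass E M Mc) (hX : X ∈ Mc 1) (hY : Y ∈ Mc 1)
    (hXY : LinearIndependent E ![X, Y]) (i : ℕ) (h2 : 2 ≤ i) {w : M}
    (hMi : Mc i = span E {w}) : ¬(⁅w, X⁆ = 0 ∧ ⁅w, Y⁆ = 0) := by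
  rintro ⟨hA, hB⟩
  have h := Msucc hM hX hY hXY i (le_trans one_le_two h2) hMi
  rw [hA, hB] at h
  have hbot : Mc (i + 1) = ⊥ := by
    rw [h]; simp
  have h1 := hM.finrank_eq_one (i + 1) (by omega)
  rw [hbot, finrank_bot] at h1
  exact absurd h1 (by omega)

lemma lieXY_ne (hM : IsMaximalClass E M Mc) (hX : X ∈ Mc 1) (hY : Y ∈ Mc 1)
    (hXY : LinearIndependent E ![X, Y]) : ⁅X, Y⁆ ≠ 0 := by
  intro h0
  have h2 : Mc 2 = span E {⁅X, Y⁆} := by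
    rw [show (2 : ℕ) = 1 + 1 from rfl, hM.span_succ 1 le_rfl, Mc1_eq hM hX hY hXY,
      span_bracket_eq, span_bracket_pair_self]
  rw [h0, span_zero_singleton] at h2
  have h1 := hM.finrank_eq_one 2 le_rfl
  rw [h2, finrank_bot] at h1
  exact absurd h1 (by omega)

lemma Lcomp_one : Lcomp F X Y 1 = span F {X, Y} := rfl

lemma Lcomp_two : Lcomp F X Y 2 = span F {⁅X, Y⁆} := by
  show span F {z : M | ∃ v ∈ Lcomp F X Y 1, ∃ a ∈ span F ({X, Y} : Set M), z = ⁅v, a⁆} = _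
  rw [Lcomp_one, span_bracket_eq, span_bracket_pair_self]

lemma Lcomp_succ (i : ℕ) (h1 : 1 ≤ i) {w : M} (h : Lcomp F X Y i = span F {w}) :
    Lcomp F X Y (i + 1) = span F {⁅w, X⁆, ⁅w, Y⁆} := by
  obtain ⟨j, rfl⟩ : ∃ j, i = j + 1 := ⟨i - 1, by omega⟩
  show span F {z : M | ∃ v ∈ Lcomp F X Y (j + 1), ∃ a ∈ span F ({X, Y} : Set M), z = ⁅v, a⁆} = _
  rw [h, span_bracket_eq, span_bracket_singleton_pair]

lemma Lcomp_le (hM : IsMaximalClass E M Mc) (hX : X ∈ Mc 1) (hY : Y ∈ Mc 1) (i : ℕ) :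
    Lcomp F X Y i ≤ Submodule.restrictScalars F (Mc i) := by
  induction i with
  | zero => exact bot_le
  | succ n ih =>
    match n, ih with
    | 0, _ => exact spanF_pair_le hX hY
    | (m + 1), ih =>
      show span F {z : M | ∃ v ∈ Lcomp F X Y (m + 1), ∃ a ∈ span F ({X, Y} : Set M),
          z = ⁅v, a⁆} ≤ _
      rw [span_le]
      rintro z ⟨v, hv, a, ha, rfl⟩
      have hvM : v ∈ Mc (m + 1) := ih hv
      have haM : a ∈ Mc 1 := spanF_pair_le (F := F) hX hY ha
      exact hM.lie_mem (m + 1) 1 v hvM a haM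

lemma pairF (hXY : LinearIndependent E ![X, Y]) :
    ∀ α β : F, α • X + β • Y = 0 → α = 0 ∧ β = 0 := by
  have hFXY : LinearIndependent F ![X, Y] :=
    hXY.restrict_scalars' F
  exact fun α β h => LinearIndependent.pair_iff.mp hFXY α β h

lemma d_eq_one_aux (hM : IsMaximalClass E M Mc) (hX : X ∈ Mc 1) (hY : Y ∈ Mc 1)
    (hXY : LinearIndependent E ![X, Y]) (i : ℕ) (h2 : 2 ≤ i) {w : M}
    (hwM : w ∈ Mc i) (hw0 : w ≠ 0) {α β : F} (hne : α ≠ 0 ∨ β ≠ 0)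
    (hrel : α • ⁅X, w⁆ + β • ⁅Y, w⁆ = 0) : dSeq E Mc F X Y i = 1 := by
  have hMi : Mc i = span E {w} := Mi_span hM i h2 hwM hw0
  have hnb := not_both hM hX hY hXY i h2 hMi
  have hnb' : ¬(⁅X, w⁆ = 0 ∧ ⁅Y, w⁆ = 0) := by
    rintro ⟨hA, hB⟩
    refine hnb ⟨?_, ?_⟩
    · rw [← lie_skew, hA, neg_zero]
    · rw [← lie_skew, hB, neg_zero]
  have hc0 : α • X + β • Y ≠ 0 := by
    intro h
    obtain ⟨h1, h2'⟩ := pairF hXY α β h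
    rcases hne with h | h <;> contradiction
  have hcL1 : α • X + β • Y ∈ Lcomp F X Y 1 := by
    rw [Lcomp_one]
    exact Submodule.mem_span_pair.2 ⟨α, β, rfl⟩
  have hcMc1 : α • X + β • Y ∈ Mc 1 := by
    have hX' : X ∈ Submodule.restrictScalars F (Mc 1) := hX
    have hY' : Y ∈ Submodule.restrictScalars F (Mc 1) := hY
    exact add_mem (Submodule.smul_mem _ α hX') (Submodule.smul_mem _ β hY')
  have hcw : ⁅α • X + β • Y, w⁆ = 0 := by
    rw [add_lie, smul_lie, smul_lie]; exact hrel
  have hcC : α • X + β • Y ∈ twoStepCentraliser Mc i := by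
    refine mem_twoStepCentraliser.2 ⟨hcMc1, ?_⟩
    intro u hu
    rw [hMi, mem_span_singleton] at hu
    obtain ⟨e, rfl⟩ := hu
    rw [lie_smul, hcw, smul_zero]
  have hP : Submodule.restrictScalars F (twoStepCentraliser Mc i) ⊓ Lcomp F X Y 1
      = span F {α • X + β • Y} := by
    apply le_antisymm
    · rintro c' hc'
      rw [Submodule.mem_inf] at hc'
      obtain ⟨hc'C, hc'L⟩ := hc'
      rw [Lcomp_one, Submodule.mem_span_pair] at hc'L
      obtain ⟨α', β', rfl⟩ := hc'L
      have hc'w : ⁅α' • X + β' • Y, w⁆ = 0 :=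
        (mem_twoStepCentraliser.1 hc'C).2 w hwM
      have hrel' : α' • ⁅X, w⁆ + β' • ⁅Y, w⁆ = 0 := by
        rw [add_lie, smul_lie, smul_lie] at hc'w; exact hc'w
      have hs : β' * α - β * α' = 0 := by
        by_contra hs
        have keyA : (β' * α - β * α') • ⁅X, w⁆ = 0 := by
          have e1 : (β' * α - β * α') • ⁅X, w⁆
              = β' • (α • ⁅X, w⁆ + β • ⁅Y, w⁆) - β • (α' • ⁅X, w⁆ + β' • ⁅Y, w⁆) := by
            module
          rw [e1, hrel, hrel', smul_zero, smul_zero, sub_zero]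
        have hs2 : α' * β - α * β' ≠ 0 := by
          intro h; apply hs; linear_combination -h
        have keyB : (α' * β - α * β') • ⁅Y, w⁆ = 0 := by
          have e2 : (α' * β - α * β') • ⁅Y, w⁆
              = α' • (α • ⁅X, w⁆ + β • ⁅Y, w⁆) - α • (α' • ⁅X, w⁆ + β' • ⁅Y, w⁆) := by
            module
          rw [e2, hrel, hrel', smul_zero, smul_zero, sub_zero]
        refine hnb' ⟨?_, ?_⟩
        · calc ⁅X, w⁆ = (β' * α - β * α')⁻¹ • ((β' * α - β * α') • ⁅X, w⁆) :=
              (inv_smul_smul₀ hs _).symm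
          _ = 0 := by rw [keyA, smul_zero]
        · calc ⁅Y, w⁆ = (α' * β - α * β')⁻¹ • ((α' * β - α * β') • ⁅Y, w⁆) :=
              (inv_smul_smul₀ hs2 _).symm
          _ = 0 := by rw [keyB, smul_zero]
      rw [mem_span_singleton]
      rcases eq_or_ne α 0 with hα | hα
      · have hβ : β ≠ 0 := hne.resolve_left (not_not_intro hα)
        have hα' : α' = 0 := by
          have hba : β * α' = 0 := by linear_combination β' * hα - hs
          exact (mul_eq_zero.mp hba).resolve_left hβ
        refine ⟨β' * β⁻¹, ?_⟩
        have e1 : (β' * β⁻¹) • (α • X + β • Y)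
            = ((β' * β⁻¹) * α) • X + ((β' * β⁻¹) * β) • Y := by
          rw [smul_add, smul_smul, smul_smul]
        have k1 : (β' * β⁻¹) * α = α' := by rw [hα, hα', mul_zero]
        have k2 : (β' * β⁻¹) * β = β' := by field_simp
        rw [e1, k1, k2]
      · refine ⟨α' * α⁻¹, ?_⟩
        have e1 : (α' * α⁻¹) • (α • X + β • Y)
            = ((α' * α⁻¹) * α) • X + ((α' * α⁻¹) * β) • Y := by
          rw [smul_add, smul_smul, smul_smul]
        have k1 : (α' * α⁻¹) * α = α' := by field_simp
        have k2 : (α' * α⁻¹) * β = β' := by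
          field_simp
          linear_combination -hs
        rw [e1, k1, k2]
    · rw [span_le]
      rintro z rfl
      exact Submodule.mem_inf.2 ⟨hcC, hcL1⟩
  show Module.finrank F
      ↥(Submodule.restrictScalars F (twoStepCentraliser Mc i) ⊓ Lcomp F X Y 1) = 1
  rw [hP, finrank_span_singleton hc0]

end main

/-- `L` has maximal class over `F` (that is, `dim_F L_i = 1` for every `i ≥ 2`)
if and only if `d_i = 1` for every `i ≥ 2`. -/
theorem stmt_7 (E : Type*) [Field E] (M : Type*) [LieRing M] [LieAlgebra E M]
    (Mc : ℕ → Submodule E M) (hM : IsMaximalClass E M Mc)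
    (F : Type*) [Field F] [Algebra F E] [LieAlgebra F M] [IsScalarTower F E M]
    (X Y : M) (hX : X ∈ Mc 1) (hY : Y ∈ Mc 1) (hXY : LinearIndependent E ![X, Y]) :
    (∀ i : ℕ, 2 ≤ i → Module.finrank F ↥(Lcomp F X Y i) = 1) ↔
      (∀ i : ℕ, 2 ≤ i → dSeq E Mc F X Y i = 1) := by
  constructor
  · -- forward: dim L_i = 1 for all i ≥ 2 implies d_i = 1 for all i ≥ 2
    intro hL
    -- first, every L_i is spanned by a single nonzero element
    have haux : ∀ i : ℕ, 2 ≤ i → ∃ w : M, w ≠ 0 ∧ Lcomp F X Y i = span F {w} := by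
      intro i hi
      induction i, hi using Nat.le_induction with
      | base => exact ⟨⁅X, Y⁆, lieXY_ne hM hX hY hXY, Lcomp_two⟩
      | succ n hn ih =>
        obtain ⟨w, hw0, hsp⟩ := ih
        have hwL : w ∈ Lcomp F X Y n := hsp ▸ mem_span_singleton_self w
        have hwM : w ∈ Mc n := Lcomp_le (F := F) hM hX hY n hwL
        have hMn : Mc n = span E {w} := Mi_span hM n hn hwM hw0
        have hnb := not_both hM hX hY hXY n hn hMn
        have hLn1 : Lcomp F X Y (n + 1) = span F {⁅w, X⁆, ⁅w, Y⁆} :=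
          Lcomp_succ n (by omega) hsp
        rcases eq_or_ne ⁅w, X⁆ 0 with hA | hA
        · have hB : ⁅w, Y⁆ ≠ 0 := fun hB => hnb ⟨hA, hB⟩
          refine ⟨⁅w, Y⁆, hB, ?_⟩
          rw [hLn1, span_pair_eq_right' (0 : F) (by rw [hA, zero_smul])]
        · refine ⟨⁅w, X⁆, hA, ?_⟩
          haveI : FiniteDimensional F (Lcomp F X Y (n + 1)) :=
            .of_finrank_eq_succ (hL (n + 1) (by omega))
          refine (Submodule.eq_of_le_of_finrank_le ?_ ?_).symm
          · rw [hLn1]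
            exact span_mono (Set.singleton_subset_iff.2 (Set.mem_insert _ _))
          · rw [hL (n + 1) (by omega), finrank_span_singleton hA]
    intro i hi
    obtain ⟨w, hw0, hsp⟩ := haux i hi
    have hwL : w ∈ Lcomp F X Y i := hsp ▸ mem_span_singleton_self w
    have hwM : w ∈ Mc i := Lcomp_le (F := F) hM hX hY i hwL
    have hMn : Mc i = span E {w} := Mi_span hM i hi hwM hw0
    have hnb := not_both hM hX hY hXY i hi hMn
    have hLn1 : Lcomp F X Y (i + 1) = span F {⁅w, X⁆, ⁅w, Y⁆} :=
      Lcomp_succ i (by omega) hsp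
    rcases eq_or_ne ⁅w, X⁆ 0 with hA | hA
    · refine d_eq_one_aux (α := (1 : F)) (β := (0 : F)) hM hX hY hXY i hi hwM hw0
        (Or.inl (one_ne_zero)) ?_
      rw [← lie_skew, hA, neg_zero, smul_zero, zero_smul, add_zero]
    · -- L_{i+1} = span {⁅w,X⁆}, hence ⁅w,Y⁆ is a multiple of ⁅w,X⁆
      have hLeq : Lcomp F X Y (i + 1) = span F {⁅w, X⁆} := by
        haveI : FiniteDimensional F (Lcomp F X Y (i + 1)) :=
          .of_finrank_eq_succ (hL (i + 1) (by omega))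
        refine (Submodule.eq_of_le_of_finrank_le ?_ ?_).symm
        · rw [hLn1]
          exact span_mono (Set.singleton_subset_iff.2 (Set.mem_insert _ _))
        · rw [hL (i + 1) (by omega), finrank_span_singleton hA]
      have hBmem : ⁅w, Y⁆ ∈ span F ({⁅w, X⁆} : Set M) := by
        rw [← hLeq, hLn1]
        exact subset_span (Set.mem_insert_of_mem _ rfl)
      rw [mem_span_singleton] at hBmem
      obtain ⟨lam, hlam⟩ := hBmem
      refine d_eq_one_aux hM hX hY hXY i hi hwM hw0
        (Or.inr (neg_ne_zero.2 one_ne_zero)) (α := lam) (β := -1) ?_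
      have e1 : ⁅X, w⁆ = -⁅w, X⁆ := (lie_skew X w).symm
      have e2 : ⁅Y, w⁆ = -⁅w, Y⁆ := (lie_skew Y w).symm
      rw [e1, e2, ← hlam]
      module
  · -- backward: d_i = 1 for all i ≥ 2 implies dim L_i = 1
    intro hd
    have haux : ∀ i : ℕ, 2 ≤ i → ∃ w : M, w ≠ 0 ∧ Lcomp F X Y i = span F {w} := by
      intro i hi
      induction i, hi using Nat.le_induction with
      | base => exact ⟨⁅X, Y⁆, lieXY_ne hM hX hY hXY, Lcomp_two⟩
      | succ n hn ih =>
        obtain ⟨w, hw0, hsp⟩ := ih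
        have hwL : w ∈ Lcomp F X Y n := hsp ▸ mem_span_singleton_self w
        have hwM : w ∈ Mc n := Lcomp_le (F := F) hM hX hY n hwL
        have hMn : Mc n = span E {w} := Mi_span hM n hn hwM hw0
        have hnb := not_both hM hX hY hXY n hn hMn
        have hLn1 : Lcomp F X Y (n + 1) = span F {⁅w, X⁆, ⁅w, Y⁆} :=
          Lcomp_succ n (by omega) hsp
        -- extract a nonzero element of C_n ∩ L_1
        have hd' : Module.finrank F
            ↥(Submodule.restrictScalars F (twoStepCentraliser Mc n) ⊓ Lcomp F X Y 1) = 1 :=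
          hd n hn
        have hPne : Submodule.restrictScalars F (twoStepCentraliser Mc n)
            ⊓ Lcomp F X Y 1 ≠ ⊥ := by
          intro h
          rw [h, finrank_bot] at hd'
          omega
        obtain ⟨c, hcP, hc0⟩ := Submodule.exists_mem_ne_zero_of_ne_bot hPne
        rw [Submodule.mem_inf] at hcP
        obtain ⟨hcC, hcL⟩ := hcP
        rw [Lcomp_one, Submodule.mem_span_pair] at hcL
        obtain ⟨α, β, rfl⟩ := hcL
        have hcw : ⁅α • X + β • Y, w⁆ = 0 :=
          (mem_twoStepCentraliser.1 hcC).2 w hwM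
        have hrel : α • ⁅X, w⁆ + β • ⁅Y, w⁆ = 0 := by
          rw [add_lie, smul_lie, smul_lie] at hcw; exact hcw
        have hrel' : α • ⁅w, X⁆ + β • ⁅w, Y⁆ = 0 := by
          have := congrArg Neg.neg hrel
          rw [neg_zero] at this
          rw [← this]
          have e1 : ⁅X, w⁆ = -⁅w, X⁆ := (lie_skew X w).symm
          have e2 : ⁅Y, w⁆ = -⁅w, Y⁆ := (lie_skew Y w).symm
          rw [e1, e2]
          module
        rcases eq_or_ne α 0 with hα | hα
        · have hβ : β ≠ 0 := by
            intro hβ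
            apply hc0
            rw [hα, hβ, zero_smul, zero_smul, add_zero]
          have hB0 : ⁅w, Y⁆ = 0 := by
            rw [hα, zero_smul, zero_add] at hrel'
            calc ⁅w, Y⁆ = β⁻¹ • (β • ⁅w, Y⁆) := (inv_smul_smul₀ hβ _).symm
            _ = 0 := by rw [hrel', smul_zero]
          have hA : ⁅w, X⁆ ≠ 0 := fun hA => hnb ⟨hA, hB0⟩
          refine ⟨⁅w, X⁆, hA, ?_⟩
          rw [hLn1, span_pair_eq_left' (0 : F) (by rw [hB0, zero_smul])]
        · have hB : ⁅w, Y⁆ ≠ 0 := by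
            intro hB0
            apply hnb
            refine ⟨?_, hB0⟩
            rw [hB0, smul_zero, add_zero] at hrel'
            calc ⁅w, X⁆ = α⁻¹ • (α • ⁅w, X⁆) := (inv_smul_smul₀ hα _).symm
            _ = 0 := by rw [hrel', smul_zero]
          have hlam : ⁅w, X⁆ = (-(α⁻¹ * β)) • ⁅w, Y⁆ := by
            have h1 : α • ⁅w, X⁆ = -(β • ⁅w, Y⁆) := by
              rw [eq_neg_iff_add_eq_zero]
              exact hrel'
            calc ⁅w, X⁆ = α⁻¹ • (α • ⁅w, X⁆) := (inv_smul_smul₀ hα _).symm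
            _ = α⁻¹ • (-(β • ⁅w, Y⁆)) := by rw [h1]
            _ = (-(α⁻¹ * β)) • ⁅w, Y⁆ := by module
          refine ⟨⁅w, Y⁆, hB, ?_⟩
          rw [hLn1, span_pair_eq_right' _ hlam]
    intro i hi
    obtain ⟨w, hw0, hsp⟩ := haux i hi
    rw [hsp, finrank_span_singleton hw0]
end
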